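/- Let Δ = Δ₁ + ⋯ + Δ_r be a Q-nef-partition of a Q-reflexive polytope Δ ⊆ ℝ^d, let v be an extreme point of Δ*, let F = {x ∈ Δ : ⟨x, v⟩ = −1} be the corresponding facet of Δ, and let F_i = {x ∈ Δ_i : ⟨x, v⟩ = min_{p ∈ Δ_i} ⟨p, v⟩} be the induced faces, so that F = F₁ + ⋯ + F_r. Then conv(F ∩ ℤ^d) = conv(F₁ ∩ ℤ^d) + ⋯ + conv(F_r ∩ ℤ^d). -/

import Mathlib

open Pointwise

noncomputable section

/-- The standard inner product on `n → ℝ`. -/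
def dot {n : Type*} [Fintype n] (x y : n → ℝ) : ℝ := ∑ i, x i * y i

/-- The lattice points of `n → ℝ`: points with integer coordinates. -/
def latt (n : Type*) [Fintype n] : Set (n → ℝ) := {x | ∀ i, ∃ m : ℤ, x i = (m : ℝ)}

/-- Polar dual `S* = {y | ⟨x,y⟩ ≥ -1 ∀ x ∈ S}`. -/
def polarDual {n : Type*} [Fintype n] (S : Set (n → ℝ)) : Set (n → ℝ) :=
  {y | ∀ x ∈ S, -1 ≤ dot x y}

/-- `[S]`: the convex hull of the lattice points of `S`. -/
def latticeHull {n : Type*} [Fintype n] (S : Set (n → ℝ)) : Set (n → ℝ) :=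
  convexHull ℝ (S ∩ latt n)

/-- A polytope: the convex hull of a finite set. -/
def IsPolytope {n : Type*} [Fintype n] (P : Set (n → ℝ)) : Prop :=
  ∃ F : Set (n → ℝ), F.Finite ∧ P = convexHull ℝ F

/-- A lattice polytope: the convex hull of a finite set of lattice points. -/
def IsLatticePolytope {n : Type*} [Fintype n] (P : Set (n → ℝ)) : Prop :=
  ∃ F : Set (n → ℝ), F.Finite ∧ F ⊆ latt n ∧ P = convexHull ℝ F

/-- A full-dimensional polytope `P` with `0` in its interior is Q-reflexive if
`[[P]*] = P*`. -/
def IsQReflexive {n : Type*} [Fintype n] (P : Set (n → ℝ)) : Prop :=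
  IsPolytope P ∧ 0 ∈ interior P ∧ latticeHull (polarDual (latticeHull P)) = polarDual P

/-- A full-dimensional lattice polytope `P` with `0` in its interior is almost reflexive
if `[[P*]*] = P`. -/
def IsAlmostReflexive {n : Type*} [Fintype n] (P : Set (n → ℝ)) : Prop :=
  IsLatticePolytope P ∧ 0 ∈ interior P ∧
    latticeHull (polarDual (latticeHull (polarDual P))) = P

/-- A full-dimensional lattice polytope `P` with `0` in its interior is reflexive
if `P*` is a lattice polytope. -/
def IsReflexive {n : Type*} [Fintype n] (P : Set (n → ℝ)) : Prop :=
  IsLatticePolytope P ∧ 0 ∈ interior P ∧ IsLatticePolytope (polarDual P)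

/-- A Q-nef-partition: a Minkowski-sum decomposition `Δ = Δ₁ + ⋯ + Δ_r` of a
Q-reflexive polytope into polytopes with `0 ∈ Δᵢ`, such that
`[Δ] = [Δ₁] + ⋯ + [Δ_r]`. -/
def IsQNefPartition {d r : ℕ} (Δ : Fin r → Set (Fin d → ℝ)) : Prop :=
  IsQReflexive (∑ i, Δ i) ∧ (∀ i, IsPolytope (Δ i)) ∧
    (∀ i, (0 : Fin d → ℝ) ∈ Δ i) ∧
    latticeHull (∑ i, Δ i) = ∑ i, latticeHull (Δ i)

/-- `∇_j := {y : ⟨x, y⟩ ≥ −δ_{ij} for all x ∈ [Δ_i] and all i}`. -/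
def nabla {d r : ℕ} (Δ : Fin r → Set (Fin d → ℝ)) (j : Fin r) : Set (Fin d → ℝ) :=
  {y | ∀ i, ∀ x ∈ latticeHull (Δ i), -(if i = j then (1 : ℝ) else 0) ≤ dot x y}

section AuxFacet

variable {d : ℕ}

lemma dot_sum_left {ι : Type*} (t : Finset ι) (f : ι → Fin d → ℝ) (v : Fin d → ℝ) :
    dot (∑ i ∈ t, f i) v = ∑ i ∈ t, dot (f i) v := by
  simp only [dot, Finset.sum_apply, Finset.sum_mul]
  exact Finset.sum_comm

lemma dot_smul_left (c : ℝ) (x v : Fin d → ℝ) : dot (c • x) v = c * dot x v := by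
  simp [dot, Finset.mul_sum, mul_assoc]

lemma dot_smul_right (c : ℝ) (x v : Fin d → ℝ) : dot x (c • v) = c * dot x v := by
  simp only [dot, Pi.smul_apply, smul_eq_mul, Finset.mul_sum]
  congr 1; ext j; ring

lemma continuous_dotv (v : Fin d → ℝ) : Continuous fun x : Fin d → ℝ => dot x v := by
  unfold dot
  exact continuous_finset_sum _ fun j _ => (continuous_apply j).mul continuous_const

lemma mem_convexHull_face {S : Set (Fin d → ℝ)} {v : Fin d → ℝ} {m : ℝ}
    (hS : ∀ x ∈ S, m ≤ dot x v) {y : Fin d → ℝ} (hy : y ∈ convexHull ℝ S)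
    (hyv : dot y v = m) : y ∈ convexHull ℝ {x ∈ S | dot x v = m} := by
  classical
  rw [convexHull_eq] at hy
  obtain ⟨ι, t, w, z, hw0, hw1, hz, rfl⟩ := hy
  have hcm : t.centerMass w z = ∑ i ∈ t, w i • z i := by
    rw [Finset.centerMass, hw1]; simp
  have hdot : dot (t.centerMass w z) v = ∑ i ∈ t, w i * dot (z i) v := by
    rw [hcm, dot_sum_left]
    exact Finset.sum_congr rfl fun i _ => dot_smul_left _ _ _
  have h0 : ∑ i ∈ t, w i * (dot (z i) v - m) = 0 := by
    simp only [mul_sub, Finset.sum_sub_distrib, ← Finset.sum_mul, hw1, one_mul, ← hdot, hyv,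
      sub_self]
  have key : ∀ i ∈ t, w i * (dot (z i) v - m) = 0 :=
    (Finset.sum_eq_zero_iff_of_nonneg fun i hi =>
      mul_nonneg (hw0 i hi) (sub_nonneg.2 (hS _ (hz i hi)))).1 h0
  rw [← Finset.centerMass_filter_ne_zero]
  refine Finset.centerMass_mem_convexHull _ (fun i hi => hw0 i (Finset.mem_filter.1 hi).1) ?_ ?_
  · rw [Finset.sum_filter_ne_zero, hw1]; norm_num
  · intro i hi
    obtain ⟨hit, hwi⟩ := Finset.mem_filter.1 hi
    refine ⟨hz i hit, ?_⟩
    rcases mul_eq_zero.1 (key i hit) with h | h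
    · exact absurd h hwi
    · linarith [sub_eq_zero.1 h]

lemma latt_sum_mem {ι : Type*} (t : Finset ι) (g : ι → Fin d → ℝ)
    (hg : ∀ i ∈ t, g i ∈ latt (Fin d)) : (∑ i ∈ t, g i) ∈ latt (Fin d) := by
  classical
  induction t using Finset.cons_induction with
  | empty => exact fun j => ⟨0, by simp⟩
  | cons a s ha ih =>
    rw [Finset.sum_cons]
    intro j
    obtain ⟨p, hp⟩ := hg a (Finset.mem_cons_self a s) j
    obtain ⟨q, hq⟩ := ih (fun i hi => hg i (Finset.mem_cons_of_mem hi)) j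
    exact ⟨p + q, by push_cast; rw [Pi.add_apply, hp, hq]⟩

lemma polytope_compact {P : Set (Fin d → ℝ)} (hP : IsPolytope P) : IsCompact P := by
  obtain ⟨G, hGf, rfl⟩ := hP
  exact hGf.isCompact_convexHull ℝ

lemma polytope_convex {P : Set (Fin d → ℝ)} (hP : IsPolytope P) : Convex ℝ P := by
  obtain ⟨G, hGf, rfl⟩ := hP
  exact convex_convexHull ℝ G

lemma exists_min_dot {P : Set (Fin d → ℝ)} (hP : IsPolytope P)
    (h0 : (0 : Fin d → ℝ) ∈ P) (v : Fin d → ℝ) :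
    (∃ p ∈ P, dot p v = sInf {t : ℝ | ∃ p ∈ P, dot p v = t}) ∧
      ∀ q ∈ P, sInf {t : ℝ | ∃ p ∈ P, dot p v = t} ≤ dot q v := by
  obtain ⟨p, hp, hmin⟩ := (polytope_compact hP).exists_isMinOn ⟨0, h0⟩
    ((continuous_dotv v).continuousOn)
  have hmin' : ∀ q ∈ P, dot p v ≤ dot q v := fun q hq => isMinOn_iff.mp hmin q hq
  have heq : sInf {t : ℝ | ∃ p ∈ P, dot p v = t} = dot p v := by
    apply le_antisymm
    · exact csInf_le ⟨dot p v, by rintro t ⟨q, hq, rfl⟩; exact hmin' q hq⟩ ⟨p, hp, rfl⟩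
    · exact le_csInf ⟨dot p v, p, hp, rfl⟩ (by rintro t ⟨q, hq, rfl⟩; exact hmin' q hq)
  exact ⟨⟨p, hp, heq.symm⟩, fun q hq => heq ▸ hmin' q hq⟩

end AuxFacet

/-- Let `Δ = Δ₁ + ⋯ + Δ_r` be a Q-nef-partition of a Q-reflexive polytope,
let `v` be an extreme point of `Δ*`, `F = {x ∈ Δ : ⟨x,v⟩ = −1}` the corresponding facet,
and `F_i = {x ∈ Δ_i : ⟨x,v⟩ = min ⟨Δ_i, v⟩}` the induced faces, so that `F = F₁ + ⋯ + F_r`.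
Then `conv(F ∩ ℤ^d) = conv(F₁ ∩ ℤ^d) + ⋯ + conv(F_r ∩ ℤ^d)`. -/
theorem facet_lattice_hull_decomposition {d r : ℕ} (hd : 0 < d)
    (Δ : Fin r → Set (Fin d → ℝ)) (hQ : IsQNefPartition Δ)
    (v : Fin d → ℝ) (hv : v ∈ Set.extremePoints ℝ (polarDual (∑ i, Δ i)))
    (F : Set (Fin d → ℝ)) (hF : F = {x ∈ ∑ i, Δ i | dot x v = -1})
    (Fi : Fin r → Set (Fin d → ℝ))
    (hFi : ∀ i, Fi i = {x ∈ Δ i | dot x v = sInf {t : ℝ | ∃ p ∈ Δ i, dot p v = t}}) :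
    F = ∑ i, Fi i ∧
      convexHull ℝ (F ∩ latt (Fin d)) = ∑ i, convexHull ℝ (Fi i ∩ latt (Fin d)) := by
  classical
  obtain ⟨⟨hpoly, h0int, _⟩, hpolyi, h0i, hlh⟩ := hQ
  obtain ⟨hvmem, hvext⟩ := hv
  set m : Fin r → ℝ := fun i => sInf {t : ℝ | ∃ p ∈ Δ i, dot p v = t} with hm
  have hmin := fun i => exists_min_dot (hpolyi i) (h0i i) v
  choose p hpmem hpval using fun i => (hmin i).1
  have hlb : ∀ i, ∀ q ∈ Δ i, m i ≤ dot q v := fun i => (hmin i).2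
  have hPmem : (∑ i, p i) ∈ ∑ i, Δ i := by
    rw [Set.mem_fintype_sum]; exact ⟨p, fun i => hpmem i, rfl⟩
  have hPval : dot (∑ i, p i) v = ∑ i, m i := by
    rw [dot_sum_left]; exact Finset.sum_congr rfl fun i _ => hpval i
  have hDlb : ∀ x ∈ ∑ i, Δ i, ∑ i, m i ≤ dot x v := by
    intro x hx
    rw [Set.mem_fintype_sum] at hx
    obtain ⟨g, hg, rfl⟩ := hx
    rw [dot_sum_left]
    exact Finset.sum_le_sum fun i _ => hlb i _ (hg i)
  have hpol : ∀ x ∈ ∑ i, Δ i, -1 ≤ dot x v := hvmem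
  have hcomp : IsCompact (∑ i, Δ i) := polytope_compact hpoly
  -- v ≠ 0
  have hv0 : v ≠ 0 := by
    intro hv0
    subst hv0
    set j : Fin d := ⟨0, hd⟩ with hj
    obtain ⟨C, hC⟩ := hcomp.exists_bound_of_continuousOn (continuous_apply j).continuousOn
    set M : ℝ := max C 0 + 1 with hM
    have hMpos : 0 < M := by positivity
    have hxj : ∀ x ∈ ∑ i, Δ i, |x j| ≤ M := by
      intro x hx
      have := hC x hx
      rw [Real.norm_eq_abs] at this
      calc |x j| ≤ C := this
        _ ≤ max C 0 + 1 := by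
            have := le_max_left C (0:ℝ); linarith
    set w : Fin d → ℝ := Pi.single j (1 / M) with hw
    have hdotw : ∀ x : Fin d → ℝ, dot x w = x j * (1 / M) := by
      intro x
      simp only [dot, hw, Pi.single_apply]
      rw [Finset.sum_eq_single j]
      · simp
      · intro b _ hb; simp [hb]
      · intro h; exact absurd (Finset.mem_univ j) h
    have hwmem : w ∈ polarDual (∑ i, Δ i) := by
      intro x hx
      rw [hdotw]
      have h1 := (abs_le.1 (hxj x hx)).1
      rw [mul_one_div, le_div_iff₀ hMpos]
      linarith
    have hwmem' : -w ∈ polarDual (∑ i, Δ i) := by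
      intro x hx
      have heqd : dot x (-w) = -(x j * (1 / M)) := by
        rw [show -w = (-1 : ℝ) • w by ext k; simp, dot_smul_right, hdotw]; ring
      rw [heqd]
      have h1 := (abs_le.1 (hxj x hx)).2
      have h2 : x j * (1 / M) ≤ 1 := by
        rw [mul_one_div, div_le_one hMpos]; exact h1
      linarith
    have hseg : (0 : Fin d → ℝ) ∈ openSegment ℝ (-w) w := by
      refine ⟨1/2, 1/2, by norm_num, by norm_num, by norm_num, ?_⟩
      ext k; simp
    have hw0 : w = 0 := neg_eq_zero.mp (hvext hwmem' hwmem hseg)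
    have hwj : (1 : ℝ) / M = 0 := by simpa [hw] using congrFun hw0 j
    have hne : (1 : ℝ) / M ≠ 0 := by positivity
    exact hne hwj
  -- the sum of the minima is -1
  have hge : -1 ≤ ∑ i, m i := by
    have := hpol _ hPmem
    rwa [hPval] at this
  have hsum : ∑ i, m i = -1 := by
    by_contra hne
    have hgt : -1 < ∑ i, m i := lt_of_le_of_ne hge (Ne.symm hne)
    obtain ⟨C, hC⟩ := hcomp.exists_bound_of_continuousOn (continuous_dotv v).continuousOn
    set M : ℝ := max C 0 + 1 with hM
    have hMpos : 0 < M := by positivity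
    have hbnd : ∀ x ∈ ∑ i, Δ i, |dot x v| ≤ M := by
      intro x hx
      have := hC x hx
      rw [Real.norm_eq_abs] at this
      have h2 := le_max_left C (0:ℝ)
      linarith
    set ε : ℝ := (∑ i, m i + 1) / (2 * M) with hε
    have hεpos : 0 < ε := by
      apply div_pos (by linarith) (by linarith)
    have hεM : ε * M = (∑ i, m i + 1) / 2 := by
      rw [hε]; field_simp
    have h1 : (1 - ε) • v ∈ polarDual (∑ i, Δ i) := by
      intro x hx
      rw [dot_smul_right]
      have ha1 := (abs_le.1 (hbnd x hx)).2
      have ha3 := hDlb x hx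
      have key : ε * dot x v ≤ (∑ i, m i + 1) / 2 := by
        calc ε * dot x v ≤ ε * M := mul_le_mul_of_nonneg_left ha1 hεpos.le
          _ = (∑ i, m i + 1) / 2 := hεM
      rw [show (1 - ε) * dot x v = dot x v - ε * dot x v from by ring]
      linarith
    have h2 : (1 + ε) • v ∈ polarDual (∑ i, Δ i) := by
      intro x hx
      rw [dot_smul_right]
      have ha2 := (abs_le.1 (hbnd x hx)).1
      have ha3 := hDlb x hx
      have key : -((∑ i, m i + 1) / 2) ≤ ε * dot x v := by
        have h := mul_le_mul_of_nonneg_left ha2 hεpos.le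
        rw [mul_neg, hεM] at h
        exact h
      rw [show (1 + ε) * dot x v = dot x v + ε * dot x v from by ring]
      linarith
    have hseg : v ∈ openSegment ℝ ((1 - ε) • v) ((1 + ε) • v) := by
      refine ⟨1/2, 1/2, by norm_num, by norm_num, by norm_num, ?_⟩
      ext k; simp; ring
    have heq := hvext h1 h2 hseg
    have : ε • v = 0 := by
      have : (1 - ε) • v - v = 0 := by rw [heq]; simp
      rw [sub_smul, one_smul] at this
      have : -(ε • v) = 0 := by rw [← this]; abel
      simpa using this
    rcases smul_eq_zero.1 this with h | h
    · exact hεpos.ne' h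
    · exact hv0 h
  -- Part 1 : F = ∑ Fi
  have hFi' : ∀ i, Fi i = {x ∈ Δ i | dot x v = m i} := fun i => hFi i
  have hFeq : F = ∑ i, Fi i := by
    ext x
    constructor
    · intro hxF
      rw [hF] at hxF
      obtain ⟨hxD, hxv⟩ := hxF
      rw [Set.mem_fintype_sum] at hxD
      obtain ⟨g, hg, rfl⟩ := hxD
      rw [Set.mem_fintype_sum]
      refine ⟨g, fun i => ?_, rfl⟩
      rw [hFi' i]
      refine ⟨hg i, ?_⟩
      have h0 : ∑ i, (dot (g i) v - m i) = 0 := by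
        rw [Finset.sum_sub_distrib, ← dot_sum_left, hxv, hsum, sub_self]
      have := (Finset.sum_eq_zero_iff_of_nonneg fun i _ =>
        sub_nonneg.2 (hlb i _ (hg i))).1 h0 i (Finset.mem_univ i)
      linarith
    · intro hxS
      rw [Set.mem_fintype_sum] at hxS
      obtain ⟨g, hg, rfl⟩ := hxS
      have hgi : ∀ i, g i ∈ Δ i ∧ dot (g i) v = m i := fun i => by
        have := hg i; rwa [hFi' i] at this
      rw [hF]
      refine ⟨?_, ?_⟩
      · rw [Set.mem_fintype_sum]; exact ⟨g, fun i => (hgi i).1, rfl⟩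
      · rw [dot_sum_left, Finset.sum_congr rfl fun i _ => (hgi i).2, hsum]
  refine ⟨hFeq, ?_⟩
  -- Part 2
  apply Set.Subset.antisymm
  · -- ⊆
    have hconvR : Convex ℝ (∑ i, convexHull ℝ (Fi i ∩ latt (Fin d))) := by
      rw [← convexHull_sum]; exact convex_convexHull ℝ _
    apply convexHull_min ?_ hconvR
    rintro z ⟨hzF, hzlatt⟩
    have hzD : z ∈ ∑ i, Δ i := by rw [hF] at hzF; exact hzF.1
    have hzv : dot z v = -1 := by rw [hF] at hzF; exact hzF.2
    have hzlh : z ∈ ∑ i, latticeHull (Δ i) := by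
      rw [← hlh]; exact subset_convexHull ℝ _ ⟨hzD, hzlatt⟩
    rw [Set.mem_fintype_sum] at hzlh
    obtain ⟨y, hy, hzeq⟩ := hzlh
    have hyΔ : ∀ i, y i ∈ Δ i := fun i => by
      have h2 : convexHull ℝ (Δ i ∩ latt (Fin d)) ⊆ Δ i :=
        convexHull_min Set.inter_subset_left (polytope_convex (hpolyi i))
      exact h2 (hy i)
    have hyv : ∀ i, dot (y i) v = m i := by
      have h1 : ∑ i, (dot (y i) v - m i) = 0 := by
        rw [Finset.sum_sub_distrib, ← dot_sum_left, hzeq, hzv, hsum, sub_self]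
      intro i
      have := (Finset.sum_eq_zero_iff_of_nonneg fun i _ =>
        sub_nonneg.2 (hlb i _ (hyΔ i))).1 h1 i (Finset.mem_univ i)
      linarith
    have hyc : ∀ i, y i ∈ convexHull ℝ (Fi i ∩ latt (Fin d)) := by
      intro i
      have hface := mem_convexHull_face (S := Δ i ∩ latt (Fin d)) (v := v) (m := m i)
        (fun x hx => hlb i x hx.1) (hy i) (hyv i)
      have hset : {x ∈ Δ i ∩ latt (Fin d) | dot x v = m i} = Fi i ∩ latt (Fin d) := by
        ext x
        rw [Set.mem_setOf_eq, Set.mem_inter_iff, Set.mem_inter_iff, hFi' i, Set.mem_setOf_eq]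
        tauto
      rwa [hset] at hface
    rw [Set.mem_fintype_sum]
    exact ⟨y, hyc, hzeq⟩
  · -- ⊇
    rw [← convexHull_sum]
    apply convexHull_mono
    rintro x hx
    rw [Set.mem_fintype_sum] at hx
    obtain ⟨g, hg, rfl⟩ := hx
    constructor
    · rw [hFeq, Set.mem_fintype_sum]
      exact ⟨g, fun i => (hg i).1, rfl⟩
    · exact latt_sum_mem _ _ fun i _ => (hg i).2
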